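/- For every integer d ≥ 2, the function (x,y) ↦ ((d+1)d·xy + (d+1)(x+y) + 1)^{1/(d+1)} is concave on any convex subset of {(x,y) ∈ ℝ² : (d+1)d·xy + (d+1)(x+y) + 1 > 0}. -/

import Mathlib

private lemma aux_pos (D AP W : ℝ) (hD : 2 ≤ D) (hAp : 0 < AP)
    (h : D * AP + 1 = (D + 1) * W) : 0 < W := by
  nlinarith

private lemma aux_sq (D sp sq AP AQ U1 V1 U2 V2 : ℝ) (hD : 2 ≤ D)
    (hsp2 : sp ^ 2 = AP) (hsq2 : sq ^ 2 = AQ)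
    (hA1 : D * AP + 1 = (D + 1) * (U1 * V1)) (hA2 : D * AQ + 1 = (D + 1) * (U2 * V2)) :
    (2 * D * (sp * sq) + 2) ^ 2 ≤ ((D + 1) * (U1 * V2 + U2 * V1)) ^ 2 := by
  have hprod : (D * AP + 1) * (D * AQ + 1) = (D + 1) ^ 2 * ((U1 * V1) * (U2 * V2)) := by
    rw [hA1, hA2]; ring
  have hpsD : D ^ 2 * (AP * AQ) = D ^ 2 * (sp * sq) ^ 2 := by
    rw [← hsp2, ← hsq2]; ring
  have hspD : D * AP = D * sp ^ 2 := by rw [hsp2]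
  have hsqD : D * AQ = D * sq ^ 2 := by rw [hsq2]
  nlinarith [sq_nonneg ((D + 1) * (U1 * V2 - U2 * V1)),
    mul_nonneg (by linarith : (0:ℝ) ≤ 4 * D) (sq_nonneg (sp - sq)),
    hprod, hpsD, hspD, hsqD]

private lemma aux_step (a sp sq Cv : ℝ) (ha : 0 ≤ a) (ha1 : 0 ≤ 1 - a)
    (hC : 2 * (sp * sq) ≤ Cv) :
    (a * sp + (1 - a) * sq) ^ 2 ≤ a ^ 2 * sp ^ 2 + (1 - a) ^ 2 * sq ^ 2 + a * (1 - a) * Cv := by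
  nlinarith [mul_nonneg (mul_nonneg ha ha1) (sub_nonneg.mpr hC)]



set_option maxHeartbeats 2000000 in
theorem stmt_8 (d : ℕ) (hd : 2 ≤ d) (s : Set (ℝ × ℝ)) (hconv : Convex ℝ s)
    (hs : s ⊆ {p : ℝ × ℝ |
      0 < ((d : ℝ) + 1) * (d : ℝ) * (p.1 * p.2) + ((d : ℝ) + 1) * (p.1 + p.2) + 1}) :
    ConcaveOn ℝ s (fun p : ℝ × ℝ =>
      (((d : ℝ) + 1) * (d : ℝ) * (p.1 * p.2) + ((d : ℝ) + 1) * (p.1 + p.2) + 1) ^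
        ((1 : ℝ) / ((d : ℝ) + 1))) := by
  have hD2 : (2:ℝ) ≤ (d:ℝ) := by exact_mod_cast hd
  set D : ℝ := (d:ℝ) with hDdef
  have hDpos : (0:ℝ) < D := by linarith
  refine ⟨hconv, ?_⟩
  intro p hp q hq a b ha hb hab
  simp only [smul_eq_mul]
  set x1 := p.1 with hx1
  set y1 := p.2 with hy1
  set x2 := q.1 with hx2
  set y2 := q.2 with hy2
  have hb' : b = 1 - a := by linarith
  subst hb'
  have ha1 : 0 ≤ 1 - a := hb
  have hm : a • p + (1-a) • q ∈ s := hconv hp hq ha hb (by ring)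
  have e1 : (a • p + (1-a) • q).1 = a * x1 + (1-a) * x2 := by simp [hx1, hx2]
  have e2 : (a • p + (1-a) • q).2 = a * y1 + (1-a) * y2 := by simp [hy1, hy2]
  rw [e1, e2]
  have hAp : 0 < (D + 1) * D * (x1 * y1) + (D + 1) * (x1 + y1) + 1 := hs hp
  have hAq : 0 < (D + 1) * D * (x2 * y2) + (D + 1) * (x2 + y2) + 1 := hs hq
  set AP := (D + 1) * D * (x1 * y1) + (D + 1) * (x1 + y1) + 1 with hAPdef
  set AQ := (D + 1) * D * (x2 * y2) + (D + 1) * (x2 + y2) + 1 with hAQdef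
  set AM := (D + 1) * D * ((a * x1 + (1-a) * x2) * (a * y1 + (1-a) * y2)) +
      (D + 1) * ((a * x1 + (1-a) * x2) + (a * y1 + (1-a) * y2)) + 1 with hAMdef
  set U1 := D * x1 + 1 with hU1
  set V1 := D * y1 + 1 with hV1
  set U2 := D * x2 + 1 with hU2
  set V2 := D * y2 + 1 with hV2
  clear_value AP AQ AM U1 V1 U2 V2
  clear hm e1 e2
  clear_value x1 y1 x2 y2 D
  have hA1 : D * AP + 1 = (D + 1) * (U1 * V1) := by rw [hAPdef, hU1, hV1]; ring
  have hA2 : D * AQ + 1 = (D + 1) * (U2 * V2) := by rw [hAQdef, hU2, hV2]; ring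
  have hUV1 : 0 < U1 * V1 := aux_pos D AP _ hD2 hAp hA1
  have hUV2 : 0 < U2 * V2 := aux_pos D AQ _ hD2 hAq hA2
  have hU1ne : U1 ≠ 0 := by
    intro h; rw [h, zero_mul] at hUV1; exact lt_irrefl 0 hUV1
  have hU2ne : U2 ≠ 0 := by
    intro h; rw [h, zero_mul] at hUV2; exact lt_irrefl 0 hUV2
  -- both endpoints lie in the same branch of the hyperbola region
  have hU12 : 0 < U1 * U2 := by
    rcases lt_or_gt_of_ne hU1ne with h1 | h1 <;> rcases lt_or_gt_of_ne hU2ne with h2 | h2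
    · exact mul_pos_of_neg_of_neg h1 h2
    · exfalso
      have hden : 0 < U2 - U1 := by linarith
      set t := U2 / (U2 - U1) with htdef
      clear_value t
      have ht0 : 0 ≤ t := htdef ▸ le_of_lt (div_pos h2 hden)
      have ht1 : t ≤ 1 := by rw [htdef, div_le_one hden]; linarith
      have hmem : t • p + (1 - t) • q ∈ s := hconv hp hq ht0 (by linarith) (by ring)
      have hApos := hs hmem
      rw [Set.mem_setOf_eq] at hApos
      have ec1 : (t • p + (1 - t) • q).1 = t * x1 + (1 - t) * x2 := by simp [hx1, hx2]
      have ec2 : (t • p + (1 - t) • q).2 = t * y1 + (1 - t) * y2 := by simp [hy1, hy2]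
      rw [ec1, ec2] at hApos
      have hlin : t * U1 + (1 - t) * U2 = 0 := by
        rw [htdef]; field_simp; ring
      have hzero : t * x1 + (1 - t) * x2 = -1 / D := by
        have h3 : D * (t * x1 + (1 - t) * x2) + 1 = t * U1 + (1 - t) * U2 := by
          rw [hU1, hU2]; ring
        rw [hlin] at h3
        rw [eq_div_iff hDpos.ne']
        linarith [h3]
      rw [hzero] at hApos
      have h4 : (D + 1) * D * (-1 / D * (t * y1 + (1 - t) * y2)) +
          (D + 1) * (-1 / D + (t * y1 + (1 - t) * y2)) + 1 = -1 / D := by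
        field_simp
        ring
      rw [h4] at hApos
      have h5 : -1 / D < 0 := div_neg_of_neg_of_pos (by norm_num) hDpos
      linarith
    · exfalso
      have hden : 0 < U1 - U2 := by linarith
      set t := U1 / (U1 - U2) with htdef
      clear_value t
      have ht0 : 0 ≤ t := htdef ▸ le_of_lt (div_pos h1 hden)
      have ht1 : t ≤ 1 := by rw [htdef, div_le_one hden]; linarith
      have hmem : (1 - t) • p + t • q ∈ s := hconv hp hq (by linarith) ht0 (by ring)
      have hApos := hs hmem
      rw [Set.mem_setOf_eq] at hApos
      have ec1 : ((1 - t) • p + t • q).1 = (1 - t) * x1 + t * x2 := by simp [hx1, hx2]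
      have ec2 : ((1 - t) • p + t • q).2 = (1 - t) * y1 + t * y2 := by simp [hy1, hy2]
      rw [ec1, ec2] at hApos
      have hlin : (1 - t) * U1 + t * U2 = 0 := by
        rw [htdef]; field_simp; ring
      have hzero : (1 - t) * x1 + t * x2 = -1 / D := by
        have h3 : D * ((1 - t) * x1 + t * x2) + 1 = (1 - t) * U1 + t * U2 := by
          rw [hU1, hU2]; ring
        rw [eq_div_iff hDpos.ne']
        linarith [h3]
      rw [hzero] at hApos
      have h4 : (D + 1) * D * (-1 / D * ((1 - t) * y1 + t * y2)) +
          (D + 1) * (-1 / D + ((1 - t) * y1 + t * y2)) + 1 = -1 / D := by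
        field_simp
        ring
      rw [h4] at hApos
      have h5 : -1 / D < 0 := div_neg_of_neg_of_pos (by norm_num) hDpos
      linarith
    · exact mul_pos h1 h2
  have hU1sq : 0 < U1 ^ 2 := by positivity
  have hU2sq : 0 < U2 ^ 2 := by positivity
  have hc12 : 0 < U1 * V2 := by
    have h := div_pos (mul_pos hU12 hUV2) hU2sq
    have heq : U1 * U2 * (U2 * V2) / U2 ^ 2 = U1 * V2 := by field_simp
    rwa [heq] at h
  have hc21 : 0 < U2 * V1 := by
    have h := div_pos (mul_pos hU12 hUV1) hU1sq
    have heq : U1 * U2 * (U1 * V1) / U1 ^ 2 = U2 * V1 := by field_simp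
    rwa [heq] at h
  -- square roots of the endpoint values
  set sp := AP ^ ((1:ℝ)/2) with hspdef
  set sq := AQ ^ ((1:ℝ)/2) with hsqdef
  clear_value sp sq
  have hsp0 : 0 ≤ sp := hspdef ▸ Real.rpow_nonneg hAp.le _
  have hsq0 : 0 ≤ sq := hsqdef ▸ Real.rpow_nonneg hAq.le _
  have hsp2 : sp ^ 2 = AP := by
    rw [hspdef, ← Real.rpow_natCast (AP ^ ((1:ℝ)/2)) 2, ← Real.rpow_mul hAp.le]
    norm_num
  have hsq2 : sq ^ 2 = AQ := by
    rw [hsqdef, ← Real.rpow_natCast (AQ ^ ((1:ℝ)/2)) 2, ← Real.rpow_mul hAq.le]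
    norm_num
  -- key inequality
  have hLpos : 0 < (D + 1) * (U1 * V2 + U2 * V1) :=
    mul_pos (by linarith) (by linarith)
  have hsqle : (2 * D * (sp * sq) + 2) ^ 2 ≤ ((D + 1) * (U1 * V2 + U2 * V1)) ^ 2 :=
    aux_sq D sp sq AP AQ U1 V1 U2 V2 hD2 hsp2 hsq2 hA1 hA2
  have hkey : 2 * D * (sp * sq) + 2 ≤ (D + 1) * (U1 * V2 + U2 * V1) :=
    le_of_pow_le_pow_left₀ two_ne_zero hLpos.le hsqle
  have hCval : 2 * (sp * sq) ≤ ((D + 1) * (U1 * V2 + U2 * V1) - 2) / D := by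
    rw [le_div_iff₀ hDpos]; linarith
  have hAMexp : AM = a^2 * AP + (1-a)^2 * AQ +
      a * (1-a) * (((D + 1) * (U1 * V2 + U2 * V1) - 2) / D) := by
    rw [hAMdef, hAPdef, hAQdef, hU1, hV1, hU2, hV2]
    field_simp
    ring
  have step1 : (a * sp + (1-a) * sq) ^ 2 ≤ AM := by
    rw [hAMexp, ← hsp2, ← hsq2]
    exact aux_step a sp sq _ ha ha1 hCval
  -- exponents
  set α := (1:ℝ) / (D + 1) with hαdef
  clear_value α
  have hα0 : 0 ≤ α := by
    rw [hαdef]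
    apply div_nonneg <;> linarith
  have h2α0 : 0 ≤ 2 * α := by linarith
  have h2α1 : 2 * α ≤ 1 := by
    rw [hαdef, mul_one_div, div_le_one (by linarith : (0:ℝ) < D + 1)]
    linarith
  have hAPα : AP ^ α = sp ^ (2 * α) := by
    rw [hspdef, ← Real.rpow_mul hAp.le]
    congr 1; ring
  have hAQα : AQ ^ α = sq ^ (2 * α) := by
    rw [hsqdef, ← Real.rpow_mul hAq.le]
    congr 1; ring
  have hconc := (Real.concaveOn_rpow h2α0 h2α1).2 (Set.mem_Ici.mpr hsp0)
    (Set.mem_Ici.mpr hsq0) ha ha1 (by ring)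
  simp only [smul_eq_mul] at hconc
  have habs0 : 0 ≤ a * sp + (1-a) * sq :=
    add_nonneg (mul_nonneg ha hsp0) (mul_nonneg ha1 hsq0)
  have hmono : (a * sp + (1-a) * sq) ^ (2 * α) ≤ AM ^ α := by
    have h1 : (a * sp + (1-a) * sq) ^ (2*α) = ((a * sp + (1-a) * sq) ^ 2) ^ α := by
      rw [← Real.rpow_natCast (a * sp + (1-a) * sq) 2, ← Real.rpow_mul habs0]
      norm_num
    rw [h1]
    exact Real.rpow_le_rpow (sq_nonneg _) step1 hα0
  calc a * AP ^ α + (1-a) * AQ ^ α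
      = a * sp ^ (2*α) + (1-a) * sq ^ (2*α) := by rw [hAPα, hAQα]
    _ ≤ (a * sp + (1-a) * sq) ^ (2*α) := hconc
    _ ≤ AM ^ α := hmono
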